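/- For all integers n ≥ 0, d_3(4n+2) ≡ 0 (mod 2). -/

import Mathlib

open PowerSeries

/-- `elongatedDiamond k n` (written `d_k(n)` in the paper) is the coefficient of `q^n` in the
formal power series `∏_{i ≥ 1} (1 - q^(2i))^k / ∏_{i ≥ 1} (1 - q^i)^(3k+1)`.
Since every factor with index `i > n` is congruent to `1` modulo `q^(n+1)`, this coefficient
equals the coefficient of `q^n` in the finite product over `1 ≤ i ≤ n`. -/
noncomputable def elongatedDiamond (k n : ℕ) : ℤ :=
  PowerSeries.coeff (R := ℤ) n
    (∏ i ∈ Finset.Icc 1 n,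
      ((1 - (PowerSeries.X : PowerSeries ℤ) ^ (2 * i)) ^ k *
        (PowerSeries.invOfUnit (1 - (PowerSeries.X : PowerSeries ℤ) ^ i) 1) ^ (3 * k + 1)))

/-- If `h` is the inverse of `1 - X^c` with `4 ∣ c`, `0 < c`, then coefficients of `h`
vanish off multiples of 4. -/
lemma inv_support_mul4 (c : ℕ) (hc : 0 < c) (hc4 : 4 ∣ c)
    (h : PowerSeries (ZMod 2)) (hh : (1 - X ^ c) * h = 1) :
    ∀ m, ¬ (4 ∣ m) → PowerSeries.coeff (R := ZMod 2) m h = 0 := by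
  have key : h = 1 + X ^ c * h := by linear_combination hh
  intro m
  induction m using Nat.strong_induction_on with
  | _ m ih =>
    intro hm
    have hm0 : m ≠ 0 := by rintro rfl; exact hm ⟨0, rfl⟩
    have e1 : PowerSeries.coeff (R := ZMod 2) m h
        = PowerSeries.coeff (R := ZMod 2) m (1 + X ^ c * h) := by rw [← key]
    rw [e1, map_add, PowerSeries.coeff_one, if_neg hm0, zero_add,
      PowerSeries.coeff_X_pow_mul']
    split_ifs with hle
    · have hlt : m - c < m := by omega
      have hnd : ¬ (4 ∣ (m - c)) := by
        intro ⟨d, hd⟩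
        obtain ⟨e, he⟩ := hc4
        exact hm ⟨d + e, by omega⟩
      exact ih _ hlt hnd
    · rfl

lemma two_eq_zero : (2 : PowerSeries (ZMod 2)) = 0 := by
  calc (2 : PowerSeries (ZMod 2)) = 1 + 1 := by norm_num
    _ = PowerSeries.C (R := ZMod 2) (1 + 1) := by rw [map_add, map_one]
    _ = 0 := by rw [show (1 + 1 : ZMod 2) = 0 from rfl, map_zero]

lemma square_lemma (j : ℕ) :
    (1 - (X : PowerSeries (ZMod 2)) ^ j) ^ 2 = 1 - X ^ (2 * j) := by
  have h2 := two_eq_zero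
  have e : (X : PowerSeries (ZMod 2)) ^ (2 * j) = (X ^ j) ^ 2 := by
    rw [← pow_mul, mul_comm]
  rw [e]
  linear_combination (((X : PowerSeries (ZMod 2)) ^ j) ^ 2 - X ^ j) * h2

theorem d3_mod2_4n2 (n : ℕ) : (2 : ℤ) ∣ elongatedDiamond 3 (4 * n + 2) := by
  set N := 4 * n + 2 with hN
  suffices h : ((elongatedDiamond 3 N : ℤ) : ZMod 2) = 0 by
    exact_mod_cast (ZMod.intCast_zmod_eq_zero_iff_dvd _ 2).mp h
  unfold elongatedDiamond
  set π : ℤ →+* ZMod 2 := Int.castRingHom (ZMod 2) with hπ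
  have hcast : ((PowerSeries.coeff (R := ℤ) N
      (∏ i ∈ Finset.Icc 1 N,
        ((1 - (PowerSeries.X : PowerSeries ℤ) ^ (2 * i)) ^ 3 *
          (PowerSeries.invOfUnit (1 - (PowerSeries.X : PowerSeries ℤ) ^ i) 1) ^ (3 * 3 + 1))) :
      ℤ) : ZMod 2)
      = PowerSeries.coeff (R := ZMod 2) N (∏ i ∈ Finset.Icc 1 N,
        ((1 - (X : PowerSeries (ZMod 2)) ^ (2 * i)) ^ 3 *
          (PowerSeries.map π
            (PowerSeries.invOfUnit (1 - (PowerSeries.X : PowerSeries ℤ) ^ i) 1)) ^ (3 * 3 + 1))) := by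
    show π _ = _
    rw [← PowerSeries.coeff_map, map_prod]
    congr 1
    refine Finset.prod_congr rfl fun i _ => ?_
    rw [map_mul, map_pow, map_pow, map_sub, map_one, map_pow, PowerSeries.map_X]
  rw [hcast]
  -- Now show the ZMod 2 coefficient is zero.
  set p : PowerSeries (ZMod 2) → Prop :=
    fun f => ∀ m, ¬ (4 ∣ m) → PowerSeries.coeff (R := ZMod 2) m f = 0 with hp
  have hmul : ∀ f g, p f → p g → p (f * g) := by
    intro f g hf hg m hm
    rw [PowerSeries.coeff_mul]
    refine Finset.sum_eq_zero fun x hx => ?_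
    rw [Finset.HasAntidiagonal.mem_antidiagonal] at hx
    rcases Classical.em (4 ∣ x.1) with h1 | h1
    · have h2 : ¬ (4 ∣ x.2) := fun h2 => hm (hx ▸ Nat.dvd_add h1 h2)
      rw [hg _ h2, mul_zero]
    · rw [hf _ h1, zero_mul]
  have hone : p 1 := by
    intro m hm
    rw [PowerSeries.coeff_one, if_neg (by rintro rfl; exact hm ⟨0, rfl⟩)]
  have hprod : p (∏ i ∈ Finset.Icc 1 N,
      ((1 - (X : PowerSeries (ZMod 2)) ^ (2 * i)) ^ 3 *
        (PowerSeries.map π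
          (PowerSeries.invOfUnit (1 - (PowerSeries.X : PowerSeries ℤ) ^ i) 1)) ^ (3 * 3 + 1))) := by
    refine Finset.prod_induction _ p hmul hone fun i hi => ?_
    rw [Finset.mem_Icc] at hi
    have hi1 : 1 ≤ i := hi.1
    set G : PowerSeries (ZMod 2) := PowerSeries.map π
      (PowerSeries.invOfUnit (1 - (PowerSeries.X : PowerSeries ℤ) ^ i) 1) with hG
    have hinv : (1 - (X : PowerSeries (ZMod 2)) ^ i) * G = 1 := by
      have hZ : (1 - (PowerSeries.X : PowerSeries ℤ) ^ i) *
          PowerSeries.invOfUnit (1 - (PowerSeries.X : PowerSeries ℤ) ^ i) 1 = 1 := by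
        apply PowerSeries.mul_invOfUnit
        simp only [map_sub, map_one, map_pow, PowerSeries.constantCoeff_X]
        rw [zero_pow (by omega : i ≠ 0)]
        simp
      have hm := congrArg (PowerSeries.map π) hZ
      rw [map_mul, map_one, map_sub, map_one, map_pow, PowerSeries.map_X] at hm
      exact hm
    have hfac : (1 - (X : PowerSeries (ZMod 2)) ^ (2 * i)) ^ 3 * G ^ (3 * 3 + 1) = G ^ 4 := by
      rw [← square_lemma i]
      have e : ((1 - (X : PowerSeries (ZMod 2)) ^ i) ^ 2) ^ 3 * G ^ (3 * 3 + 1)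
          = ((1 - (X : PowerSeries (ZMod 2)) ^ i) * G) ^ 6 * G ^ 4 := by ring
      rw [e, hinv, one_pow, one_mul]
    rw [hfac]
    have hpow4 : (1 - (X : PowerSeries (ZMod 2)) ^ (4 * i)) * G ^ 4 = 1 := by
      have e1 : (1 - (X : PowerSeries (ZMod 2)) ^ (4 * i))
          = (1 - (X : PowerSeries (ZMod 2)) ^ i) ^ 4 := by
        have h1 := square_lemma i
        have h2 := square_lemma (2 * i)
        have e : (4 : ℕ) * i = 2 * (2 * i) := by ring
        rw [e, ← h2, ← h1, ← pow_mul]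
      rw [e1, ← mul_pow, hinv, one_pow]
    exact inv_support_mul4 (4 * i) (by omega) ⟨i, rfl⟩ _ hpow4
  exact hprod N (by omega)
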